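/- arXiv:1012.3279 — 2 statements merged into one kernel-verified Lean document; each statement's English description precedes it below -/
import Mathlib

section
/- Let R be a commutative ring, A a commutative R-algebra, and P = (A ⊗_R A)/I² the first infinitesimal neighborhood of the diagonal, with the two A-algebra structures p_1, p_2 : A → P. Given an A-module M, a P-linear isomorphism ε : P ⊗_{p_2, A} M ≅ M ⊗_{A, p_1} P whose reduction modulo I/I² is the identity of M determines an R-linear connection ∇ : M → M ⊗_A Ω_{A/R} satisfying the Leibniz rule ∇(a·m) = a·∇(m) + m ⊗ da; the connection is defined as the difference between the map m ↦ ε(1 ⊗ m) and the canonical inclusion m ↦ m ⊗ 1, landing in M ⊗_A I/I² = M ⊗_A Ω_{A/R}. -/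
open TensorProduct

noncomputable section

variable (R A : Type u) [CommRing R] [CommRing A] [Algebra R A]

/-- The first infinitesimal neighbourhood `P = (A ⊗[R] A)/I²` of the diagonal, where `I`
is the kernel of the multiplication map `A ⊗[R] A → A`. -/
abbrev InfNbhd := (A ⊗[R] A) ⧸ (KaehlerDifferential.ideal R A ^ 2)

/-- The second `A`-algebra structure map `p₂ : A → P` (the first one, `p₁`, is the
canonical `algebraMap A P` through the left tensor factor). -/
def p2 : A →+* InfNbhd R A :=
  (Ideal.Quotient.mk (KaehlerDifferential.ideal R A ^ 2)).comp
    (Algebra.TensorProduct.includeRight.toRingHom)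

/-- Type synonym for `P` viewed as an `A`-algebra via `p₂`. -/
def InfR := InfNbhd R A

instance : CommRing (InfR R A) := inferInstanceAs (CommRing (InfNbhd R A))
instance : Algebra A (InfR R A) := (p2 R A).toAlgebra
instance : Module (InfNbhd R A) (InfR R A) :=
  inferInstanceAs (Module (InfNbhd R A) (InfNbhd R A))
instance : SMulCommClass A (InfNbhd R A) (InfR R A) :=
  ⟨fun a p x => mul_left_comm (p2 R A a) p x⟩

/-- The inclusion `Ω[A⁄R] = I/I² → P`. -/
def jmap : Ω[A⁄R] →ₗ[A] InfNbhd R A where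
  toFun w := (KaehlerDifferential.ideal R A).cotangentToQuotientSquare w
  map_add' x y := map_add _ x y
  map_smul' a w := by
    simp only [RingHom.id_apply]
    rw [← algebraMap_smul (A ⊗[R] A) a w]
    erw [map_smul]
    rw [algebraMap_smul]

variable (M : Type u) [AddCommGroup M] [Module A M]

/-- The canonical embedding `M ⊗[A] Ω[A⁄R] → P ⊗[A] M` induced by `Ω = I/I² ⊆ P`
(together with the symmetry of the tensor product). -/
def kappa : M ⊗[A] Ω[A⁄R] →ₗ[A] InfNbhd R A ⊗[A] M :=
  (LinearMap.rTensor M (jmap R A)).comp (TensorProduct.comm A M (Ω[A⁄R])).toLinearMap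

set_option maxHeartbeats 1000000
set_option synthInstance.maxHeartbeats 1000000

-- multiplication as A-linear map
def mulA : A ⊗[R] A →ₗ[A] A := (Algebra.TensorProduct.lmul'' R).toLinearMap

lemma sigma_mem (x : A ⊗[R] A) :
    x - algebraMap A (A ⊗[R] A) (mulA R A x) ∈ KaehlerDifferential.ideal R A := by
  rw [RingHom.mem_ker]
  have h1 : (Algebra.TensorProduct.lmul' R : A ⊗[R] A →ₐ[R] A)
      (x - algebraMap A (A ⊗[R] A) (mulA R A x)) =
      mulA R A x - mulA R A (algebraMap A (A ⊗[R] A) (mulA R A x)) := map_sub _ _ _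
  have h2 : mulA R A (algebraMap A (A ⊗[R] A) (mulA R A x)) = mulA R A x := by
    have := (Algebra.TensorProduct.lmul'' (S := A) R).commutes (mulA R A x)
    simpa [mulA] using this
  show (Algebra.TensorProduct.lmul' R : A ⊗[R] A →ₐ[R] A) _ = 0
  rw [h1, h2, sub_self]

def rtilde : (A ⊗[R] A) →ₗ[A] Ω[A⁄R] where
  toFun x := (KaehlerDifferential.ideal R A).toCotangent
    ⟨x - algebraMap A (A ⊗[R] A) (mulA R A x), sigma_mem R A x⟩
  map_add' x y := by
    change (KaehlerDifferential.ideal R A).toCotangent _ =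
      (KaehlerDifferential.ideal R A).toCotangent _ + (KaehlerDifferential.ideal R A).toCotangent _
    rw [← map_add]
    congr 1
    ext
    simp only [map_add, AddMemClass.coe_add]
    ring
  map_smul' a x := by
    change (KaehlerDifferential.ideal R A).toCotangent _ =
      a • (KaehlerDifferential.ideal R A).toCotangent _
    rw [← LinearMap.map_smul_of_tower]
    congr 1
    ext
    show a • x - algebraMap A (A ⊗[R] A) (mulA R A (a • x)) =
      a • (x - algebraMap A (A ⊗[R] A) (mulA R A x))
    have h1 : mulA R A (a • x) = a * mulA R A x := by rw [map_smul, smul_eq_mul]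
    rw [h1, map_mul, smul_sub, ← Algebra.smul_def]

lemma rtilde_sq (x : A ⊗[R] A)
    (hx' : x ∈ (KaehlerDifferential.ideal R A ^ 2).restrictScalars A) :
    rtilde R A x = 0 := by
  have hx : x ∈ KaehlerDifferential.ideal R A ^ 2 := hx'
  have hx1 : x ∈ KaehlerDifferential.ideal R A :=
    Ideal.pow_le_self two_ne_zero hx
  have hm : mulA R A x = 0 := hx1
  simp only [rtilde, LinearMap.coe_mk, AddHom.coe_mk, hm, map_zero, sub_zero]
  exact (Ideal.toCotangent_eq_zero _ _).mpr (by simpa [hm] using hx)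

def rmap : InfNbhd R A →ₗ[A] Ω[A⁄R] :=
  (Submodule.liftQ ((KaehlerDifferential.ideal R A ^ 2).restrictScalars A) (rtilde R A)
    (fun x hx => rtilde_sq R A x hx)).comp
    (Submodule.Quotient.restrictScalarsEquiv A
      (KaehlerDifferential.ideal R A ^ 2 : Ideal (A ⊗[R] A))).symm.toLinearMap

lemma rmap_mk (x : A ⊗[R] A) :
    rmap R A (Ideal.Quotient.mk _ x) = rtilde R A x := by
  simp [rmap, Submodule.Quotient.restrictScalarsEquiv_symm_mk]
  rfl

lemma rmap_jmap (w : Ω[A⁄R]) : rmap R A (jmap R A w) = w := by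
  obtain ⟨⟨x, hx⟩, rfl⟩ := Ideal.toCotangent_surjective _ w
  have hj : jmap R A ((KaehlerDifferential.ideal R A).toCotangent ⟨x, hx⟩) =
      Ideal.Quotient.mk (KaehlerDifferential.ideal R A ^ 2) x := rfl
  rw [hj, rmap_mk]
  have hm : mulA R A x = 0 := hx
  simp only [rtilde, LinearMap.coe_mk, AddHom.coe_mk, hm, map_zero, sub_zero]
  change (KaehlerDifferential.ideal R A).toCotangent _ = _
  congr 1
  ext
  simp [hm]

lemma jmap_mul (w w' : Ω[A⁄R]) : jmap R A w * jmap R A w' = 0 := by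
  have h1 : jmap R A w ∈ (KaehlerDifferential.ideal R A).cotangentIdeal := by
    have := (KaehlerDifferential.ideal R A).range_cotangentToQuotientSquare
    have : (KaehlerDifferential.ideal R A).cotangentToQuotientSquare w ∈
        LinearMap.range (KaehlerDifferential.ideal R A).cotangentToQuotientSquare :=
      LinearMap.mem_range_self _ _
    rw [Ideal.range_cotangentToQuotientSquare] at this
    exact this
  have h2 : jmap R A w' ∈ (KaehlerDifferential.ideal R A).cotangentIdeal := by
    have : (KaehlerDifferential.ideal R A).cotangentToQuotientSquare w' ∈
        LinearMap.range (KaehlerDifferential.ideal R A).cotangentToQuotientSquare :=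
      LinearMap.mem_range_self _ _
    rw [Ideal.range_cotangentToQuotientSquare] at this
    exact this
  have hmem : jmap R A w * jmap R A w' ∈
      (KaehlerDifferential.ideal R A).cotangentIdeal * (KaehlerDifferential.ideal R A).cotangentIdeal :=
    Ideal.mul_mem_mul h1 h2
  rw [← pow_two, Ideal.cotangentIdeal_square] at hmem
  rwa [Ideal.mem_bot] at hmem

lemma p2_sub (a : A) :
    p2 R A a - algebraMap A (InfNbhd R A) a = jmap R A (KaehlerDifferential.D R A a) := by
  have : jmap R A (KaehlerDifferential.D R A a) =
      Ideal.Quotient.mk (KaehlerDifferential.ideal R A ^ 2)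
        ((1 : A) ⊗ₜ[R] a - a ⊗ₜ[R] (1 : A)) := rfl
  rw [this, RingHom.map_sub]
  rfl


lemma kappa_tmul (m : M) (w : Ω[A⁄R]) :
    kappa R A M (m ⊗ₜ[A] w) = jmap R A w ⊗ₜ[A] m := rfl

/-- Retraction of `kappa`. -/
def rho : InfNbhd R A ⊗[A] M →ₗ[A] M ⊗[A] Ω[A⁄R] :=
  (TensorProduct.comm A (Ω[A⁄R]) M).toLinearMap.comp (LinearMap.rTensor M (rmap R A))

lemma rho_kappa (u : M ⊗[A] Ω[A⁄R]) : rho R A M (kappa R A M u) = u := by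
  induction u using TensorProduct.induction_on with
  | zero => simp
  | tmul m w =>
      rw [kappa_tmul]
      show (TensorProduct.comm A (Ω[A⁄R]) M) (LinearMap.rTensor M (rmap R A) (jmap R A w ⊗ₜ[A] m)) = _
      rw [LinearMap.rTensor_tmul, rmap_jmap]
      rfl
  | add x y hx hy => rw [map_add, map_add, hx, hy]

lemma jmap_smul_kappa (w : Ω[A⁄R]) (u : M ⊗[A] Ω[A⁄R]) :
    jmap R A w • kappa R A M u = 0 := by
  induction u using TensorProduct.induction_on with
  | zero => rw [map_zero, smul_zero]
  | tmul m w' =>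
      rw [kappa_tmul, TensorProduct.smul_tmul', smul_eq_mul, jmap_mul,
        TensorProduct.zero_tmul]
  | add x y hx hy => rw [map_add, smul_add, hx, hy, add_zero]

/-- A `1`-stratification on an `A`-module `M` is a `P`-linear isomorphism
`ε : P ⊗_{p₂,A} M ≅ M ⊗_{A,p₁} P` (the right-hand side written here, via the symmetry of
the tensor product, as `P ⊗_{p₁,A} M`) whose reduction modulo `I/I²` is the identity of
`M` (equivalently, `ε(1 ⊗ m) − 1 ⊗ m` lies in the image of `M ⊗ Ω[A⁄R] = M ⊗ I/I²`).
Such an `ε` determines an `R`-linear connection `∇ : M → M ⊗[A] Ω[A⁄R]` satisfying the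
Leibniz rule `∇(a·m) = a·∇(m) + m ⊗ da`, defined as the difference between `m ↦ ε(1 ⊗ m)`
and the canonical inclusion `m ↦ m ⊗ 1`. -/
theorem stmt9 (R A : Type u) [CommRing R] [CommRing A] [Algebra R A]
    (M : Type u) [AddCommGroup M] [Module A M]
    (ε : (InfR R A ⊗[A] M) ≃ₗ[InfNbhd R A] (InfNbhd R A ⊗[A] M))
    (hred : ∀ m : M,
      ε ((1 : InfR R A) ⊗ₜ[A] m) - (1 : InfNbhd R A) ⊗ₜ[A] m ∈
        LinearMap.range (kappa R A M)) :
    ∃ D : M →+ M ⊗[A] Ω[A⁄R],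
      (∀ (a : A) (m : M),
        D (a • m) = a • D m + m ⊗ₜ[A] KaehlerDifferential.D R A a) ∧
      ∀ m : M, ε ((1 : InfR R A) ⊗ₜ[A] m) =
        (1 : InfNbhd R A) ⊗ₜ[A] m + kappa R A M (D m) := by
  classical
  have hDadd : ∀ m n : M,
      rho R A M (ε ((1 : InfR R A) ⊗ₜ[A] (m + n)) - (1 : InfNbhd R A) ⊗ₜ[A] (m + n)) =
      rho R A M (ε ((1 : InfR R A) ⊗ₜ[A] m) - (1 : InfNbhd R A) ⊗ₜ[A] m) +
      rho R A M (ε ((1 : InfR R A) ⊗ₜ[A] n) - (1 : InfNbhd R A) ⊗ₜ[A] n) := by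
    intro m n
    rw [TensorProduct.tmul_add, TensorProduct.tmul_add, map_add]
    have h : ε ((1 : InfR R A) ⊗ₜ[A] m) + ε ((1 : InfR R A) ⊗ₜ[A] n) -
        ((1 : InfNbhd R A) ⊗ₜ[A] m + (1 : InfNbhd R A) ⊗ₜ[A] n) =
        (ε ((1 : InfR R A) ⊗ₜ[A] m) - (1 : InfNbhd R A) ⊗ₜ[A] m) +
        (ε ((1 : InfR R A) ⊗ₜ[A] n) - (1 : InfNbhd R A) ⊗ₜ[A] n) := by abel
    rw [h, map_add]
  have hkey : ∀ k : M, ε ((1 : InfR R A) ⊗ₜ[A] k) = (1 : InfNbhd R A) ⊗ₜ[A] k +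
      kappa R A M (rho R A M (ε ((1 : InfR R A) ⊗ₜ[A] k) - (1 : InfNbhd R A) ⊗ₜ[A] k)) := by
    intro k
    obtain ⟨x, hx⟩ := hred k
    rw [← hx, rho_kappa, hx]
    abel
  refine ⟨{ toFun := fun m => rho R A M (ε ((1 : InfR R A) ⊗ₜ[A] m) - (1 : InfNbhd R A) ⊗ₜ[A] m),
            map_zero' := by simp,
            map_add' := hDadd }, ?_, ?_⟩
  · -- Leibniz rule
    intro a m
    simp only [AddMonoidHom.coe_mk, ZeroHom.coe_mk]
    set Dm := rho R A M (ε ((1 : InfR R A) ⊗ₜ[A] m) - (1 : InfNbhd R A) ⊗ₜ[A] m) with hDm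
    have e1 : (1 : InfR R A) ⊗ₜ[A] (a • m) = (p2 R A a) • ((1 : InfR R A) ⊗ₜ[A] m) := by
      rw [TensorProduct.tmul_smul, TensorProduct.smul_tmul', TensorProduct.smul_tmul']
      congr 1
    have e2 : (1 : InfNbhd R A) ⊗ₜ[A] (a • m) =
        (algebraMap A (InfNbhd R A) a) • ((1 : InfNbhd R A) ⊗ₜ[A] m) := by
      rw [TensorProduct.tmul_smul, algebraMap_smul]
    have e3 : ∀ u : M ⊗[A] Ω[A⁄R],
        (algebraMap A (InfNbhd R A) a) • kappa R A M u = kappa R A M (a • u) := by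
      intro u
      rw [algebraMap_smul, map_smul]
    have hji : jmap R A ((KaehlerDifferential.D R A) a) • ((1 : InfNbhd R A) ⊗ₜ[A] m) =
        kappa R A M (m ⊗ₜ[A] (KaehlerDifferential.D R A) a) := by
      rw [TensorProduct.smul_tmul', smul_eq_mul, mul_one, kappa_tmul]
    have hjsplit : p2 R A a • kappa R A M Dm = kappa R A M (a • Dm) := by
      have hp : p2 R A a =
          algebraMap A (InfNbhd R A) a + jmap R A ((KaehlerDifferential.D R A) a) := by
        rw [← p2_sub]; abel
      rw [hp, add_smul, e3, jmap_smul_kappa, add_zero]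
    have hdiff : ε ((1 : InfR R A) ⊗ₜ[A] (a • m)) - (1 : InfNbhd R A) ⊗ₜ[A] (a • m) =
        kappa R A M (a • Dm + m ⊗ₜ[A] (KaehlerDifferential.D R A) a) := by
      rw [e1, map_smul, hkey m, ← hDm, e2, smul_add]
      have hre : (p2 R A a) • ((1 : InfNbhd R A) ⊗ₜ[A] m) + (p2 R A a) • kappa R A M Dm
          - (algebraMap A (InfNbhd R A) a) • ((1 : InfNbhd R A) ⊗ₜ[A] m)
          = (p2 R A a - algebraMap A (InfNbhd R A) a) • ((1 : InfNbhd R A) ⊗ₜ[A] m)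
            + (p2 R A a) • kappa R A M Dm := by
        have hs : ∀ (r s : InfNbhd R A) (y : InfNbhd R A ⊗[A] M), (r - s) • y = r • y - s • y :=
          fun r s y => sub_smul r s y
        rw [hs]; abel
      rw [hre, p2_sub, hji, hjsplit, ← map_add]
      rw [add_comm]
    rw [hdiff, rho_kappa]
  · -- reduction property
    intro m
    simp only [AddMonoidHom.coe_mk, ZeroHom.coe_mk]
    obtain ⟨x, hx⟩ := hred m
    rw [← hx, rho_kappa, hx]
    abel

end
end

section
/- Let R = ℚ⟨t,∂⟩/(∂t − t∂ − 1) be the first Weyl algebra over ℚ. In the following commutative diagram of left R-module maps, both rows are exact: 0 → R →(right mult. by ∂) R →(P ↦ P(1)) ℚ[t] → 0, and 0 → R →(right mult. by t∂+1) R →(P ↦ P(1/t)) ℚ[t, t^{-1}] → 0, where the vertical maps are the identity on the first terms, right multiplication by t on the middle terms, and the inclusion ℚ[t] ⊆ ℚ[t,t^{-1}] on the last terms. Consequently the snake lemma yields an isomorphism of left R-modules R/R·t ≅ ℚ[t,t^{-1}]/ℚ[t]. -/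
set_option maxHeartbeats 1000000
set_option synthInstance.maxHeartbeats 400000

noncomputable section

open LaurentPolynomial

/-- Multiplication by `t` on `ℚ[t,t⁻¹]`. -/
def mulT : Module.End ℚ (LaurentPolynomial ℚ) := LinearMap.mulLeft ℚ (T 1)

/-- The derivation `d/dt` on `ℚ[t,t⁻¹]`, sending `tⁿ` to `n·tⁿ⁻¹` for all `n ∈ ℤ`. -/
def lderiv : Module.End ℚ (LaurentPolynomial ℚ) :=
  (Finsupp.lsum ℚ fun n : ℤ =>
    LinearMap.toSpanSingleton ℚ (LaurentPolynomial ℚ) ((n : ℚ) • T (n - 1))) ∘ₗ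
    (AddMonoidAlgebra.coeffLinearEquiv (S := ℚ) (M := ℤ) ℚ).toLinearMap

/-- The first Weyl algebra `R = ℚ⟨t,∂⟩/(∂t − t∂ − 1)`, realised faithfully as the
subalgebra of `ℚ`-linear endomorphisms of `ℚ[t,t⁻¹]` generated by multiplication by `t`
and differentiation. -/
def WeylL : Type _ := Algebra.adjoin ℚ {mulT, lderiv}

instance : Ring WeylL := inferInstanceAs (Ring (Algebra.adjoin ℚ {mulT, lderiv}))
instance : Algebra ℚ WeylL := inferInstanceAs (Algebra ℚ (Algebra.adjoin ℚ {mulT, lderiv}))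

/-- The tautological representation of the Weyl algebra on `ℚ[t,t⁻¹]`. -/
def toEndL : WeylL →+* Module.End ℚ (LaurentPolynomial ℚ) :=
  ((Algebra.adjoin ℚ {mulT, lderiv}).val.toRingHom :
    WeylL →+* Module.End ℚ (LaurentPolynomial ℚ))

/-- `ℚ[t,t⁻¹]` is a left module over the Weyl algebra. -/
instance : Module WeylL (LaurentPolynomial ℚ) :=
  Module.compHom (LaurentPolynomial ℚ) toEndL

/-- The element `t` of the Weyl algebra. -/
def tL : WeylL := ⟨mulT, Algebra.subset_adjoin (Set.mem_insert _ _)⟩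

/-- The element `∂` of the Weyl algebra. -/
def dL : WeylL := ⟨lderiv, Algebra.subset_adjoin (Set.mem_insert_of_mem _ rfl)⟩

-- basic lemmas
lemma T_eq_single (n : ℤ) : (T n : LaurentPolynomial ℚ).coeff = Finsupp.single n 1 := rfl

lemma lderiv_T (n : ℤ) : lderiv (T n) = (n:ℚ) • T (n-1) := by
  rw [lderiv, LinearMap.comp_apply, LinearEquiv.coe_coe,
    AddMonoidAlgebra.coeffLinearEquiv_apply, T_eq_single n]
  erw [Finsupp.lsum_single, LinearMap.toSpanSingleton_apply, one_smul]

lemma mulT_T (n : ℤ) : mulT (T n) = T (n+1) := by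
  rw [mulT, LinearMap.mulLeft_apply, ← T_add, add_comm]

lemma toEndL_apply (x : WeylL) : toEndL x = x.1 := rfl

lemma toEndL_mul (x y : WeylL) (f : LaurentPolynomial ℚ) :
    toEndL (x*y) f = toEndL x (toEndL y f) := by
  rw [map_mul]; rfl

lemma toEndL_injective : Function.Injective toEndL := fun x y h => Subtype.ext h

lemma toEndL_tL : toEndL tL = mulT := rfl
lemma toEndL_dL : toEndL dL = lderiv := rfl

lemma tL_pow_apply (i : ℕ) : ∀ n : ℤ, toEndL (tL^i) (T n) = T (n + i) := by
  induction i with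
  | zero => intro n; norm_num
  | succ i ih =>
    intro n
    rw [pow_succ, toEndL_mul, toEndL_tL, mulT_T, ih (n+1)]
    congr 1; push_cast; ring


lemma endExt {f g : Module.End ℚ (LaurentPolynomial ℚ)}
    (h : ∀ n : ℤ, f (T n) = g (T n)) : f = g := by
  apply AddMonoidAlgebra.lhom_ext'
  intro a; apply LinearMap.ext; intro b
  have : (AddMonoidAlgebra.lsingle (R := ℚ) a b : LaurentPolynomial ℚ) = b • T a := by
    rw [AddMonoidAlgebra.lsingle_apply, T, AddMonoidAlgebra.smul_single, smul_eq_mul, mul_one]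
  rw [LinearMap.comp_apply, LinearMap.comp_apply, this, map_smul, map_smul]; exact congrArg (b • ·) (h a)

lemma wExt {x y : WeylL} (h : ∀ n : ℤ, toEndL x (T n) = toEndL y (T n)) : x = y :=
  toEndL_injective (endExt h)

lemma dt_rel : dL * tL = tL * dL + 1 := by
  apply wExt
  intro n
  rw [toEndL_mul, map_add, LinearMap.add_apply, toEndL_mul, toEndL_tL, toEndL_dL, map_one,
    mulT_T, lderiv_T, lderiv_T, map_smul, mulT_T, Module.End.one_apply]
  have e1 : (n:ℤ)+1-1 = n := by ring
  have e2 : (n:ℤ)-1+1 = n := by ring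
  rw [e1, e2]
  push_cast
  rw [add_smul, one_smul]

lemma dpow_t (j : ℕ) : dL^(j+1) * tL = tL * dL^(j+1) + ((j:ℚ)+1) • dL^j := by
  induction j with
  | zero => simpa using dt_rel
  | succ j ih =>
    have : dL^(j+1+1) * tL = dL * (dL^(j+1) * tL) := by
      rw [← mul_assoc, ← pow_succ']
    rw [this, ih, mul_add, ← mul_assoc, dt_rel, add_mul, one_mul, mul_assoc,
      ← pow_succ', mul_smul_comm, ← pow_succ']
    push_cast
    module

lemma d_tpow (i : ℕ) : dL * tL^(i+1) = tL^(i+1) * dL + ((i:ℚ)+1) • tL^i := by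
  induction i with
  | zero => simpa using dt_rel
  | succ i ih =>
    have : dL * tL^(i+1+1) = (dL * tL^(i+1)) * tL := by
      rw [mul_assoc, ← pow_succ]
    rw [this, ih, add_mul, smul_mul_assoc, mul_assoc, dt_rel, mul_add, mul_one,
      ← mul_assoc, ← pow_succ, ← pow_succ]
    push_cast
    module

lemma adjoin_top : Algebra.adjoin ℚ {tL, dL} = (⊤ : Subalgebra ℚ WeylL) := by
  have := Algebra.adjoin_adjoin_coe_preimage (R := ℚ) (s := {mulT, lderiv})
  refine Eq.trans ?_ this
  congr 1
  ext x
  constructor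
  · rintro (rfl | rfl)
    · left; rfl
    · right; rfl
  · rintro (h | h)
    · left; exact Subtype.ext h
    · right; exact Subtype.ext h

-- monomial span
def Mon : Set WeylL := {y | ∃ i j : ℕ, y = tL^i * dL^j}

def AS : Subalgebra ℚ WeylL where
  carrier := {w | ∀ x ∈ Submodule.span ℚ Mon, w * x ∈ Submodule.span ℚ Mon}
  mul_mem' := fun ha hb x hx => by rw [mul_assoc]; exact ha _ (hb x hx)
  one_mem' := fun x hx => by rwa [one_mul]
  add_mem' := fun ha hb x hx => by
    rw [add_mul]; exact Submodule.add_mem _ (ha x hx) (hb x hx)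
  algebraMap_mem' := fun q x hx => by
    rw [← Algebra.smul_def]; exact Submodule.smul_mem _ _ hx

lemma tL_mem_AS : tL ∈ AS := by
  intro x hx
  induction hx using Submodule.span_induction with
  | mem y hy =>
    obtain ⟨i, j, rfl⟩ := hy
    exact Submodule.subset_span ⟨i+1, j, by rw [← mul_assoc, pow_succ']⟩
  | zero => rw [mul_zero]; exact Submodule.zero_mem _
  | add y z _ _ hy hz => rw [mul_add]; exact Submodule.add_mem _ hy hz
  | smul a y _ hy => rw [mul_smul_comm]; exact Submodule.smul_mem _ _ hy

lemma dL_mem_AS : dL ∈ AS := by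
  intro x hx
  induction hx using Submodule.span_induction with
  | mem y hy =>
    obtain ⟨i, j, rfl⟩ := hy
    match i with
    | 0 =>
      have : dL * (tL^0 * dL^j) = tL^0 * dL^(j+1) := by
        rw [pow_zero, one_mul, one_mul, pow_succ']
      rw [this]
      exact Submodule.subset_span ⟨0, j+1, rfl⟩
    | (i+1) =>
      have : dL * (tL^(i+1) * dL^j) =
          tL^(i+1) * dL^(j+1) + ((i:ℚ)+1) • (tL^i * dL^j) := by
        rw [← mul_assoc, d_tpow i, add_mul, smul_mul_assoc, mul_assoc, ← pow_succ']
      rw [this]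
      exact Submodule.add_mem _ (Submodule.subset_span ⟨i+1, j+1, rfl⟩)
        (Submodule.smul_mem _ _ (Submodule.subset_span ⟨i, j, rfl⟩))
  | zero => rw [mul_zero]; exact Submodule.zero_mem _
  | add y z _ _ hy hz => rw [mul_add]; exact Submodule.add_mem _ hy hz
  | smul a y _ hy => rw [mul_smul_comm]; exact Submodule.smul_mem _ _ hy

lemma mem_span_mon (x : WeylL) : x ∈ Submodule.span ℚ Mon := by
  have hA : (⊤ : Subalgebra ℚ WeylL) ≤ AS := by
    rw [← adjoin_top]
    apply Algebra.adjoin_le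
    rintro y (rfl | rfl)
    · exact tL_mem_AS
    · exact dL_mem_AS
  have hx : x ∈ AS := hA trivial
  have := hx 1 (Submodule.subset_span ⟨0, 0, by rw [pow_zero, one_mul, pow_zero]⟩)
  rwa [mul_one] at this

-- linear evaluation maps
def evm : WeylL →ₗ[ℚ] LaurentPolynomial ℚ where
  toFun := fun x => toEndL x (T (-1))
  map_add' := fun x y => by
    show toEndL (x + y) (T (-1)) = toEndL x (T (-1)) + toEndL y (T (-1))
    rw [map_add]; rfl
  map_smul' := fun c x => by
    show toEndL (c • x) (T (-1)) = c • toEndL x (T (-1))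
    rfl

def ev1 : WeylL →ₗ[ℚ] LaurentPolynomial ℚ where
  toFun := fun x => toEndL x (1 : LaurentPolynomial ℚ)
  map_add' := fun x y => by
    show toEndL (x + y) 1 = toEndL x 1 + toEndL y 1
    rw [map_add]; rfl
  map_smul' := fun c x => by
    show toEndL (c • x) 1 = c • toEndL x 1
    rfl

lemma one_eq_T0 : (1 : LaurentPolynomial ℚ) = T 0 := T_zero.symm

lemma ev1_tpow (i : ℕ) : ev1 (tL^i) = T i := by
  show toEndL (tL^i) 1 = _
  rw [one_eq_T0, tL_pow_apply, zero_add]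

lemma evm_tpow (i : ℕ) : evm (tL^i) = T (-1 + i) := by
  show toEndL (tL^i) (T (-1)) = _
  rw [tL_pow_apply]

-- the constants aC m = (-1)^m m!
def aC : ℕ → ℚ
  | 0 => 1
  | (m+1) => aC m * (-(1+m))

lemma aC_ne_zero : ∀ m, aC m ≠ 0
  | 0 => one_ne_zero
  | (m+1) => mul_ne_zero (aC_ne_zero m) (by push_cast; intro h; nlinarith [Nat.cast_nonneg (α := ℚ) m])

lemma evm_dpow (m : ℕ) : evm (dL^m) = aC m • T (-1 - m) := by
  induction m with
  | zero =>
    show toEndL 1 (T (-1)) = aC 0 • T (-1 - 0)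
    rw [map_one]
    show T (-1) = aC 0 • T (-1 - 0)
    norm_num [aC]
  | succ m ih =>
    have : dL^(m+1) = dL * dL^m := by rw [pow_succ']
    show toEndL (dL^(m+1)) (T (-1)) = _
    rw [this, toEndL_mul]
    show lderiv (evm (dL^m)) = _
    rw [ih, map_smul, lderiv_T]
    rw [smul_smul]
    have h1 : aC m * ((-1 - m : ℤ) : ℚ) = aC (m+1) := by
      show _ = aC m * (-(1+m))
      push_cast; ring
    rw [h1]
    congr 2
    push_cast; ring

-- the splitting map s
def sfun (n : ℤ) : WeylL :=
  if -1 ≤ n then tL^((n+1).toNat) else (aC ((-1-n).toNat))⁻¹ • dL^((-1-n).toNat)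

def sm : LaurentPolynomial ℚ →ₗ[ℚ] WeylL :=
  (Finsupp.lsum ℚ fun n : ℤ => LinearMap.toSpanSingleton ℚ WeylL (sfun n)) ∘ₗ
    (AddMonoidAlgebra.coeffLinearEquiv (S := ℚ) (M := ℤ) ℚ).toLinearMap

lemma sm_T (n : ℤ) : sm (T n) = sfun n := by
  rw [sm, LinearMap.comp_apply, LinearEquiv.coe_coe,
    AddMonoidAlgebra.coeffLinearEquiv_apply, T_eq_single n]
  erw [Finsupp.lsum_single, LinearMap.toSpanSingleton_apply, one_smul]

lemma lExt {M : Type*} [AddCommMonoid M] [Module ℚ M]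
    {f g : LaurentPolynomial ℚ →ₗ[ℚ] M}
    (h : ∀ n : ℤ, f (T n) = g (T n)) : f = g := by
  apply AddMonoidAlgebra.lhom_ext'
  intro a; apply LinearMap.ext; intro b
  have : (AddMonoidAlgebra.lsingle (R := ℚ) a b : LaurentPolynomial ℚ) = b • T a := by
    rw [AddMonoidAlgebra.lsingle_apply, T, AddMonoidAlgebra.smul_single, smul_eq_mul, mul_one]
  rw [LinearMap.comp_apply, LinearMap.comp_apply, this, map_smul, map_smul]; exact congrArg (b • ·) (h a)

lemma evm_sm (f : LaurentPolynomial ℚ) : evm (sm f) = f := by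
  have : evm.comp sm = LinearMap.id := by
    apply lExt
    intro n
    rw [LinearMap.comp_apply, LinearMap.id_apply, sm_T, sfun]
    by_cases h : -1 ≤ n
    · rw [if_pos h, evm_tpow]
      congr 1
      rw [Int.toNat_of_nonneg (by omega)]
      omega
    · rw [if_neg h, map_smul, evm_dpow, smul_smul,
        inv_mul_cancel₀ (aC_ne_zero _), one_smul]
      congr 1
      rw [Int.toNat_of_nonneg (by omega)]
      omega
  exact congrArg (· f) this |>.trans rfl |>.trans rfl
  -- alternative: LinearMap.congr_fun this f

lemma evm_surjective : Function.Surjective (fun P : WeylL => toEndL P (T (-1))) :=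
  fun f => ⟨sm f, evm_sm f⟩

-- right multiplication maps
def rmul (a : WeylL) : WeylL →ₗ[ℚ] WeylL where
  toFun := fun x => x * a
  map_add' := fun x y => add_mul x y a
  map_smul' := fun c x => smul_mul_assoc c x a


def Jm : Submodule ℚ WeylL := LinearMap.range (rmul (tL * dL + 1))
def J1 : Submodule ℚ WeylL := LinearMap.range (rmul dL)
def J2 : Submodule ℚ WeylL := LinearMap.range (rmul tL)

lemma evm_ann (y : WeylL) : evm (y * (tL * dL + 1)) = 0 := by
  show toEndL (y * (tL*dL+1)) (T (-1)) = 0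
  rw [toEndL_mul]
  have h : toEndL (tL*dL+1) (T (-1)) = 0 := by
    rw [map_add, LinearMap.add_apply, toEndL_mul, toEndL_tL, toEndL_dL, map_one,
      Module.End.one_apply, lderiv_T, map_smul, mulT_T]
    push_cast
    norm_num
  rw [h, map_zero]

lemma ev1_ann (y : WeylL) : ev1 (y * dL) = 0 := by
  show toEndL (y * dL) 1 = 0
  rw [toEndL_mul, toEndL_dL, one_eq_T0, lderiv_T]
  norm_num

lemma K_mem (x : WeylL) : x - sm (evm x) ∈ Jm := by
  have main : ∀ j i : ℕ, (tL^i * dL^j) - sm (evm (tL^i * dL^j)) ∈ Jm := by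
    intro j
    induction j with
    | zero =>
      intro i
      have h1 : tL^i * dL^0 = tL^i := by rw [pow_zero, mul_one]
      rw [h1, evm_tpow, sm_T, sfun, if_pos (by omega : (-1:ℤ) ≤ -1 + i)]
      have h2 : ((-1 + (i:ℤ)) + 1).toNat = i := by omega
      rw [h2, sub_self]
      exact Submodule.zero_mem _
    | succ j ih =>
      intro i
      match i with
      | 0 =>
        have h1 : tL^0 * dL^(j+1) = dL^(j+1) := by rw [pow_zero, one_mul]
        have hneg : ¬ ((-1:ℤ) ≤ -1 - ((j:ℤ)+1)) := by omega
        have htn : ((-1:ℤ) - (-1 - ((j:ℤ)+1))).toNat = j+1 := by omega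
        rw [h1, evm_dpow, map_smul, sm_T, sfun]
        push_cast
        rw [if_neg hneg, htn, smul_smul, mul_inv_cancel₀ (aC_ne_zero _), one_smul,
          sub_self]
        exact Submodule.zero_mem _
      | (i+1) =>
        set y := tL^i * dL^j with hy
        have e1 : y * (tL*dL+1) = tL^i * (dL^(j+1) * tL) := by
          rw [← dt_rel, hy, ← mul_assoc, mul_assoc (tL^i) (dL^j) dL, ← pow_succ,
            mul_assoc]
        have e2 : tL^i * (dL^(j+1) * tL) =
            tL^(i+1) * dL^(j+1) + ((j:ℚ)+1) • y := by
          rw [dpow_t j, mul_add, ← mul_assoc, ← pow_succ, mul_smul_comm]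
        have e3 : tL^(i+1) * dL^(j+1) = y * (tL*dL+1) - ((j:ℚ)+1) • y := by
          rw [e1, e2, add_sub_cancel_right]
        rw [e3]
        have e4 : y * (tL*dL+1) - ((j:ℚ)+1) • y
            - sm (evm (y * (tL*dL+1) - ((j:ℚ)+1) • y))
            = y * (tL*dL+1) - ((j:ℚ)+1) • (y - sm (evm y)) := by
          rw [map_sub, map_smul, evm_ann, zero_sub, map_neg, map_smul,
            sub_neg_eq_add, smul_sub]
          abel
        rw [e4]
        exact Submodule.sub_mem _ ⟨y, rfl⟩ (Submodule.smul_mem _ _ (ih i))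
  induction mem_span_mon x using Submodule.span_induction with
  | mem y hy => obtain ⟨i, j, rfl⟩ := hy; exact main j i
  | zero => rw [map_zero, map_zero, sub_zero]; exact Submodule.zero_mem _
  | add y z _ _ hy hz =>
    have : y + z - sm (evm (y + z)) = (y - sm (evm y)) + (z - sm (evm z)) := by
      rw [map_add, map_add]; abel
    rw [this]; exact Submodule.add_mem _ hy hz
  | smul a y _ hy =>
    have : a • y - sm (evm (a • y)) = a • (y - sm (evm y)) := by
      rw [map_smul, map_smul, smul_sub]
    rw [this]; exact Submodule.smul_mem _ _ hy

def sfun1 (n : ℤ) : WeylL := if 0 ≤ n then tL^(n.toNat) else 0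

def sm1 : LaurentPolynomial ℚ →ₗ[ℚ] WeylL :=
  (Finsupp.lsum ℚ fun n : ℤ => LinearMap.toSpanSingleton ℚ WeylL (sfun1 n)) ∘ₗ
    (AddMonoidAlgebra.coeffLinearEquiv (S := ℚ) (M := ℤ) ℚ).toLinearMap

lemma sm1_T (n : ℤ) : sm1 (T n) = sfun1 n := by
  rw [sm1, LinearMap.comp_apply, LinearEquiv.coe_coe,
    AddMonoidAlgebra.coeffLinearEquiv_apply, T_eq_single n]
  erw [Finsupp.lsum_single, LinearMap.toSpanSingleton_apply, one_smul]

lemma K1_mem (x : WeylL) : x - sm1 (ev1 x) ∈ J1 := by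
  have main : ∀ i j : ℕ, (tL^i * dL^j) - sm1 (ev1 (tL^i * dL^j)) ∈ J1 := by
    intro i j
    match j with
    | 0 =>
      have h1 : tL^i * dL^0 = tL^i := by rw [pow_zero, mul_one]
      rw [h1, ev1_tpow, sm1_T, sfun1, if_pos (by positivity : (0:ℤ) ≤ i),
        Int.toNat_natCast, sub_self]
      exact Submodule.zero_mem _
    | (j+1) =>
      have h1 : tL^i * dL^(j+1) = (tL^i * dL^j) * dL := by
        rw [mul_assoc, ← pow_succ]
      rw [h1, ev1_ann, map_zero, sub_zero]
      exact ⟨tL^i * dL^j, rfl⟩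
  induction mem_span_mon x using Submodule.span_induction with
  | mem y hy => obtain ⟨i, j, rfl⟩ := hy; exact main i j
  | zero => rw [map_zero, map_zero, sub_zero]; exact Submodule.zero_mem _
  | add y z _ _ hy hz =>
    have : y + z - sm1 (ev1 (y + z)) = (y - sm1 (ev1 y)) + (z - sm1 (ev1 z)) := by
      rw [map_add, map_add]; abel
    rw [this]; exact Submodule.add_mem _ hy hz
  | smul a y _ hy =>
    have : a • y - sm1 (ev1 (a • y)) = a • (y - sm1 (ev1 y)) := by
      rw [map_smul, map_smul, smul_sub]
    rw [this]; exact Submodule.smul_mem _ _ hy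

def D0 : Submodule ℚ WeylL := Submodule.span ℚ (Set.range fun j : ℕ => dL ^ j)

lemma K2_mem (x : WeylL) : x ∈ J2 ⊔ D0 := by
  have main : ∀ i j : ℕ, tL^i * dL^j ∈ J2 ⊔ D0 := by
    intro i
    induction i with
    | zero =>
      intro j
      have h1 : tL^0 * dL^j = dL^j := by rw [pow_zero, one_mul]
      rw [h1]
      exact Submodule.mem_sup_right (Submodule.subset_span ⟨j, rfl⟩)
    | succ i ih =>
      intro j
      match j with
      | 0 =>
        have h1 : tL^(i+1) * dL^0 = tL^i * tL := by rw [pow_zero, mul_one, pow_succ]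
        rw [h1]
        exact Submodule.mem_sup_left ⟨tL^i, rfl⟩
      | (j+1) =>
        have e1 : (tL^i * dL^(j+1)) * tL = tL^(i+1) * dL^(j+1) + ((j:ℚ)+1) • (tL^i * dL^j) := by
          rw [mul_assoc, dpow_t j, mul_add, ← mul_assoc, ← pow_succ, mul_smul_comm]
        have e2 : tL^(i+1) * dL^(j+1) =
            (tL^i * dL^(j+1)) * tL - ((j:ℚ)+1) • (tL^i * dL^j) := by
          rw [e1, add_sub_cancel_right]
        rw [e2]
        exact Submodule.sub_mem _ (Submodule.mem_sup_left ⟨tL^i * dL^(j+1), rfl⟩)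
          (Submodule.smul_mem _ _ (ih j))
  induction mem_span_mon x using Submodule.span_induction with
  | mem y hy => obtain ⟨i, j, rfl⟩ := hy; exact main i j
  | zero => exact Submodule.zero_mem _
  | add y z _ _ hy hz => exact Submodule.add_mem _ hy hz
  | smul a y _ hy => exact Submodule.smul_mem _ _ hy


-- faithfulness of the representation
def RepP (q : ℤ →₀ Polynomial ℚ) (w : Module.End ℚ (LaurentPolynomial ℚ)) : Prop :=
  ∀ n : ℤ, w (T n) = q.sum fun k p => (p.eval (n:ℚ)) • T (n+k)

lemma repP_zero_eval {q : ℤ →₀ Polynomial ℚ} {w : Module.End ℚ (LaurentPolynomial ℚ)}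
    (h : RepP q w) (h0 : ∀ m : ℕ, w (T (m:ℤ)) = 0) : w = 0 := by
  have key : ∀ k : ℤ, q k = 0 := by
    intro k
    apply Polynomial.eq_zero_of_infinite_isRoot
    refine Set.infinite_of_injective_forall_mem
      (f := fun m : ℕ => (m:ℚ)) (fun a b hab => Nat.cast_injective hab) ?_
    intro m
    show Polynomial.eval (m:ℚ) (q k) = 0
    have hm := (h m).symm.trans (h0 m)
    -- hm : q.sum (fun k p => eval m p • T (m+k)) = 0
    have := congrArg (fun f : LaurentPolynomial ℚ => f.coeff ((m:ℤ) + k)) hm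
    rw [AddMonoidAlgebra.coeff_finsuppSum, Finsupp.sum_apply] at this
    have hsum : (q.sum fun k' p => ((Polynomial.eval (((m:ℤ)):ℚ) p • T ((m:ℤ)+k') :
        LaurentPolynomial ℚ)).coeff ((m:ℤ)+k))
        = q.sum fun k' p => if k' = k then Polynomial.eval (((m:ℤ)):ℚ) p else 0 := by
      apply Finsupp.sum_congr
      intro k' _
      rw [T, AddMonoidAlgebra.smul_single, AddMonoidAlgebra.coeff_single, Finsupp.single_apply, smul_eq_mul,
        mul_one]
      by_cases hk : k' = k
      · rw [if_pos hk, if_pos (by omega), hk]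
      · rw [if_neg (by omega), if_neg hk]
    rw [hsum] at this
    rw [Finsupp.sum_ite_eq' q k (fun k' p => Polynomial.eval (((m:ℤ)):ℚ) p)] at this
    by_cases hs : k ∈ q.support
    · rw [if_pos hs] at this; push_cast at this ⊢; exact this
    · rw [Finsupp.notMem_support_iff] at hs
      rw [hs, Polynomial.eval_zero]
  have hq : q = 0 := Finsupp.ext key
  apply endExt
  intro n
  rw [h n, hq, Finsupp.sum_zero_index]
  rfl

def GoodSet : Subalgebra ℚ (Module.End ℚ (LaurentPolynomial ℚ)) where
  carrier := {w | ∃ q, RepP q w}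
  one_mem' := by
    refine ⟨Finsupp.single 0 1, fun n => ?_⟩
    rw [Finsupp.sum_single_index (by rw [Polynomial.eval_zero, zero_smul])]
    rw [Polynomial.eval_one, one_smul, add_zero]
    rfl
  mul_mem' := by
    rintro w w' ⟨q, hq⟩ ⟨q', hq'⟩
    refine ⟨q'.sum fun k p' => q.sum fun l p =>
      Finsupp.single (k+l) (p' * p.comp (Polynomial.X + Polynomial.C (k:ℚ))), ?_⟩
    intro n
    show w (w' (T n)) = _
    rw [hq' n, map_finsuppSum]
    rw [Finsupp.sum_sum_index (fun a => by rw [Polynomial.eval_zero, zero_smul])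
      (fun a b c => by rw [Polynomial.eval_add, add_smul])]
    apply Finsupp.sum_congr
    intro k _
    rw [Finsupp.sum_sum_index (fun a => by rw [Polynomial.eval_zero, zero_smul])
      (fun a b c => by rw [Polynomial.eval_add, add_smul])]
    rw [map_smul, hq (n+k), Finsupp.smul_sum]
    apply Finsupp.sum_congr
    intro l _
    rw [Finsupp.sum_single_index (by rw [Polynomial.eval_zero, zero_smul])]
    rw [Polynomial.eval_mul, Polynomial.eval_comp, Polynomial.eval_add,
      Polynomial.eval_X, Polynomial.eval_C, smul_smul]
    congr 1
    · push_cast; ring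
    · congr 1; ring
  add_mem' := by
    rintro w w' ⟨q, hq⟩ ⟨q', hq'⟩
    refine ⟨q + q', fun n => ?_⟩
    show w (T n) + w' (T n) = _
    rw [hq n, hq' n,
      Finsupp.sum_add_index' (fun a => by rw [Polynomial.eval_zero, zero_smul])
        (fun a b c => by rw [Polynomial.eval_add, add_smul])]
  algebraMap_mem' := by
    intro c
    refine ⟨Finsupp.single 0 (Polynomial.C c), fun n => ?_⟩
    rw [Finsupp.sum_single_index (by rw [Polynomial.eval_zero, zero_smul])]
    rw [Polynomial.eval_C, add_zero]
    rfl


lemma good_mem (W : WeylL) : ∃ q, RepP q (toEndL W) := by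
  have hG : Algebra.adjoin ℚ {mulT, lderiv} ≤ GoodSet := by
    apply Algebra.adjoin_le
    rintro y (rfl | rfl)
    · refine ⟨Finsupp.single 1 (Polynomial.C 1), fun n => ?_⟩
      rw [Finsupp.sum_single_index (by rw [Polynomial.eval_zero, zero_smul]),
        Polynomial.eval_C, one_smul, mulT_T]
    · refine ⟨Finsupp.single (-1) Polynomial.X, fun n => ?_⟩
      rw [Finsupp.sum_single_index (by rw [Polynomial.eval_zero, zero_smul]),
        Polynomial.eval_X, lderiv_T, sub_eq_add_neg]
  exact hG W.2

lemma faithful (W : WeylL) (h0 : ∀ m : ℕ, toEndL W (T (m:ℤ)) = 0) : W = 0 := by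
  obtain ⟨q, hq⟩ := good_mem W
  have h : toEndL W = 0 := repP_zero_eval hq h0
  apply toEndL_injective
  rw [h, map_zero]

lemma inj_d : Function.Injective (fun P : WeylL => P * dL) := by
  have h : ∀ P : WeylL, P * dL = 0 → P = 0 := by
    intro P hP
    apply faithful
    intro m
    have h1 : toEndL (P * dL) (T ((m:ℤ)+1)) = 0 := by rw [hP, map_zero]; rfl
    rw [toEndL_mul, toEndL_dL, lderiv_T] at h1
    have h2 : ((m:ℤ)+1-1) = (m:ℤ) := by ring
    rw [h2, map_smul] at h1
    have h3 : (((m:ℤ)+1 : ℤ):ℚ) ≠ 0 := by push_cast; positivity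
    exact (smul_eq_zero.mp h1).resolve_left h3
  intro P Q hPQ
  have hb : P * dL = Q * dL := hPQ
  have := h (P - Q) (by rw [sub_mul, hb, sub_self])
  exact sub_eq_zero.mp this

lemma td_T (n : ℤ) : toEndL (tL * dL + 1) (T n) = ((n:ℚ)+1) • T n := by
  rw [map_add, LinearMap.add_apply, toEndL_mul, toEndL_tL, toEndL_dL, map_one,
    Module.End.one_apply, lderiv_T, map_smul, mulT_T]
  have h2 : (n:ℤ)-1+1 = n := by ring
  rw [h2, add_smul, one_smul]

lemma inj_td : Function.Injective (fun P : WeylL => P * (tL * dL + 1)) := by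
  have h : ∀ P : WeylL, P * (tL * dL + 1) = 0 → P = 0 := by
    intro P hP
    apply faithful
    intro m
    have h1 : toEndL (P * (tL * dL + 1)) (T (m:ℤ)) = 0 := by rw [hP, map_zero]; rfl
    rw [toEndL_mul, td_T, map_smul] at h1
    have h3 : ((m:ℤ):ℚ)+1 ≠ 0 := by push_cast; positivity
    exact (smul_eq_zero.mp h1).resolve_left h3
  intro P Q hPQ
  have hb : P * (tL * dL + 1) = Q * (tL * dL + 1) := hPQ
  have := h (P - Q) (by rw [sub_mul, hb, sub_self])
  exact sub_eq_zero.mp this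

-- the submodule ℚ[t]
def Vsub : Submodule ℚ (LaurentPolynomial ℚ) :=
  Submodule.span ℚ (Set.range fun m : ℕ => (T (m:ℤ) : LaurentPolynomial ℚ))

lemma smul_T (a : ℚ) (n : ℤ) :
    (LaurentPolynomial.C a * T n : LaurentPolynomial ℚ) = a • T n := by
  rw [← single_eq_C_mul_T, T, AddMonoidAlgebra.smul_single, smul_eq_mul, mul_one]

lemma V_eq_range : (Vsub : Set _) = Set.range (Polynomial.toLaurent (R := ℚ)) := by
  apply Set.eq_of_subset_of_subset
  · intro f hf
    induction hf using Submodule.span_induction with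
    | mem y hy =>
      obtain ⟨m, rfl⟩ := hy
      exact ⟨Polynomial.X^m, Polynomial.toLaurent_X_pow m⟩
    | zero => exact ⟨0, map_zero _⟩
    | add y z _ _ hy hz =>
      obtain ⟨p, rfl⟩ := hy; obtain ⟨p', rfl⟩ := hz
      exact ⟨p + p', map_add _ _ _⟩
    | smul a y _ hy =>
      obtain ⟨p, rfl⟩ := hy
      refine ⟨a • p, ?_⟩
      rw [← Polynomial.toLaurentAlg_apply, map_smul, Polynomial.toLaurentAlg_apply]
  · rintro f ⟨p, rfl⟩
    show _ ∈ Vsub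
    induction p using Polynomial.induction_on' with
    | add p q hp hq => rw [map_add]; exact Submodule.add_mem _ hp hq
    | monomial n a =>
      have h1 : Polynomial.toLaurent (Polynomial.monomial n a) = a • T (n:ℤ) := by
        rw [Polynomial.toLaurent_C_mul_T, smul_T]
      rw [h1]
      exact Submodule.smul_mem _ _ (Submodule.subset_span ⟨n, rfl⟩)

def AV : Subalgebra ℚ WeylL where
  carrier := {w | ∀ f ∈ Vsub, toEndL w f ∈ Vsub}
  one_mem' := fun f hf => by rw [map_one, Module.End.one_apply]; exact hf
  mul_mem' := fun {a b} ha hb f hf => by rw [toEndL_mul]; exact ha _ (hb f hf)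
  add_mem' := fun {a b} ha hb f hf => by
    rw [map_add, LinearMap.add_apply]
    exact Submodule.add_mem _ (ha f hf) (hb f hf)
  algebraMap_mem' := fun c f hf => by
    have h : toEndL (algebraMap ℚ WeylL c) f = c • f := rfl
    rw [h]
    exact Submodule.smul_mem _ _ hf

lemma tL_mem_AV : tL ∈ AV := by
  intro f hf
  induction hf using Submodule.span_induction with
  | mem y hy =>
    obtain ⟨m, rfl⟩ := hy
    have h1 : toEndL tL (T (m:ℤ)) = T ((m+1 : ℕ):ℤ) := by
      rw [toEndL_tL, mulT_T]; push_cast; ring_nf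
    rw [h1]
    exact Submodule.subset_span ⟨m+1, rfl⟩
  | zero => rw [map_zero]; exact Submodule.zero_mem _
  | add y z _ _ hy hz => rw [map_add]; exact Submodule.add_mem _ hy hz
  | smul a y _ hy => rw [map_smul]; exact Submodule.smul_mem _ _ hy

lemma dL_mem_AV : dL ∈ AV := by
  intro f hf
  induction hf using Submodule.span_induction with
  | mem y hy =>
    obtain ⟨m, rfl⟩ := hy
    rw [toEndL_dL, lderiv_T]
    match m with
    | 0 => norm_num
    | (m+1) =>
      have h1 : (((m+1:ℕ):ℤ) - 1) = ((m:ℕ):ℤ) := by push_cast; ring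
      rw [h1]
      exact Submodule.smul_mem _ _ (Submodule.subset_span ⟨m, rfl⟩)
  | zero => rw [map_zero]; exact Submodule.zero_mem _
  | add y z _ _ hy hz => rw [map_add]; exact Submodule.add_mem _ hy hz
  | smul a y _ hy => rw [map_smul]; exact Submodule.smul_mem _ _ hy

lemma V_closed (w : WeylL) (f : LaurentPolynomial ℚ) (hf : f ∈ Vsub) :
    toEndL w f ∈ Vsub := by
  have hA : (⊤ : Subalgebra ℚ WeylL) ≤ AV := by
    rw [← adjoin_top]
    apply Algebra.adjoin_le
    rintro y (rfl | rfl)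
    · exact tL_mem_AV
    · exact dL_mem_AV
  exact hA (show w ∈ (⊤ : Subalgebra ℚ WeylL) from trivial) f hf

lemma wsmul_eq (c : WeylL) (f : LaurentPolynomial ℚ) : c • f = toEndL c f := rfl

def NN : Submodule WeylL (LaurentPolynomial ℚ) where
  carrier := Set.range (Polynomial.toLaurent (R := ℚ))
  zero_mem' := ⟨0, map_zero _⟩
  add_mem' := by
    rintro a b ⟨p, rfl⟩ ⟨q, rfl⟩
    exact ⟨p + q, map_add _ _ _⟩
  smul_mem' := by
    intro c f hf
    have hf' : f ∈ Vsub := by rw [← SetLike.mem_coe, V_eq_range]; exact hf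
    have h2 := V_closed c f hf'
    rw [← SetLike.mem_coe, V_eq_range] at h2
    exact h2


-- coefficient functionals
def clE (n : ℤ) : LaurentPolynomial ℚ →ₗ[ℚ] ℚ := Finsupp.lapply n ∘ₗ
    (AddMonoidAlgebra.coeffLinearEquiv (S := ℚ) (M := ℤ) ℚ).toLinearMap

lemma clE_T (n k : ℤ) : clE n (T k) = if k = n then 1 else 0 := by
  rw [clE, LinearMap.comp_apply, LinearEquiv.coe_coe,
    AddMonoidAlgebra.coeffLinearEquiv_apply, T_eq_single]
  erw [Finsupp.lapply_apply, Finsupp.single_apply]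

def Eneg : Submodule ℚ (LaurentPolynomial ℚ) :=
  Submodule.span ℚ (Set.range fun m : ℕ => (T (-1 - (m:ℤ)) : LaurentPolynomial ℚ))

lemma Eneg_zero (f : LaurentPolynomial ℚ) (hf : f ∈ Eneg) (n : ℤ) (hn : 0 ≤ n) :
    clE n f = 0 := by
  induction hf using Submodule.span_induction with
  | mem y hy =>
    obtain ⟨m, rfl⟩ := hy
    rw [clE_T, if_neg (by omega)]
  | zero => rw [map_zero]
  | add y z _ _ hy hz => rw [map_add, hy, hz, add_zero]
  | smul a y _ hy => rw [map_smul, hy, smul_zero]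

lemma V_zero (f : LaurentPolynomial ℚ) (hf : f ∈ Vsub) (n : ℤ) (hn : n < 0) :
    clE n f = 0 := by
  induction hf using Submodule.span_induction with
  | mem y hy =>
    obtain ⟨m, rfl⟩ := hy
    rw [clE_T, if_neg (by omega)]
  | zero => rw [map_zero]
  | add y z _ _ hy hz => rw [map_add, hy, hz, add_zero]
  | smul a y _ hy => rw [map_smul, hy, smul_zero]

lemma eq_zero_of_mem_both (f : LaurentPolynomial ℚ) (h1 : f ∈ Eneg) (h2 : f ∈ Vsub) :
    f = 0 := by
  have key : ∀ n : ℤ, clE n f = 0 := by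
    intro n
    rcases le_or_gt 0 n with hn | hn
    · exact Eneg_zero f h1 n hn
    · exact V_zero f h2 n hn
  exact AddMonoidAlgebra.coeff_injective (Finsupp.ext key)

lemma evm_dpow_mem (j : ℕ) : evm (dL^j) ∈ Eneg := by
  rw [evm_dpow]
  exact Submodule.smul_mem _ _ (Submodule.subset_span ⟨j, rfl⟩)

lemma D0_evm {c : WeylL} (hc : c ∈ D0) : evm c ∈ Eneg := by
  induction hc using Submodule.span_induction with
  | mem y hy => obtain ⟨j, rfl⟩ := hy; exact evm_dpow_mem j
  | zero => rw [map_zero]; exact Submodule.zero_mem _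
  | add y z _ _ hy hz => rw [map_add]; exact Submodule.add_mem _ hy hz
  | smul a y _ hy => rw [map_smul]; exact Submodule.smul_mem _ _ hy

lemma sm_evm_dpow (j : ℕ) : sm (evm (dL^j)) = dL^j := by
  match j with
  | 0 =>
    rw [evm_dpow, map_smul, sm_T, sfun]
    norm_num [aC]
  | (j+1) =>
    have hneg : ¬ ((-1:ℤ) ≤ -1 - ((j:ℤ)+1)) := by omega
    have htn : ((-1:ℤ) - (-1 - ((j:ℤ)+1))).toNat = j+1 := by omega
    rw [evm_dpow, map_smul, sm_T, sfun]
    push_cast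
    rw [if_neg hneg, htn, smul_smul, mul_inv_cancel₀ (aC_ne_zero _), one_smul]

lemma D0_sm_evm {c : WeylL} (hc : c ∈ D0) : sm (evm c) = c := by
  induction hc using Submodule.span_induction with
  | mem y hy => obtain ⟨j, rfl⟩ := hy; exact sm_evm_dpow j
  | zero => rw [map_zero, map_zero]
  | add y z _ _ hy hz => rw [map_add, map_add, hy, hz]
  | smul a y _ hy => rw [map_smul, map_smul, hy]

-- range of ev1 is N
lemma range_ev1 : Set.range (fun P : WeylL => toEndL P (1 : LaurentPolynomial ℚ))
    = (NN : Set _) := by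
  apply Set.eq_of_subset_of_subset
  · rintro f ⟨P, rfl⟩
    show toEndL P 1 ∈ NN
    rw [← wsmul_eq]
    exact NN.smul_mem P ⟨1, map_one _⟩
  · intro f hf
    have hf' : f ∈ Vsub := by rw [← SetLike.mem_coe, V_eq_range]; exact hf
    have hle : Vsub ≤ LinearMap.range ev1 := by
      rw [Vsub, Submodule.span_le]
      rintro y ⟨m, rfl⟩
      exact ⟨tL^m, ev1_tpow m⟩
    obtain ⟨P, hP⟩ := hle hf'
    exact ⟨P, hP⟩

-- exactness of the rows
lemma exact_row1 : Function.Exact (fun P : WeylL => P * dL)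
    (fun P : WeylL => toEndL P (1 : LaurentPolynomial ℚ)) := by
  intro P
  constructor
  · intro hP
    have h1 : ev1 P = 0 := hP
    have h2 := K1_mem P
    rw [h1, map_zero, sub_zero] at h2
    obtain ⟨y, hy⟩ := h2
    exact ⟨y, hy⟩
  · rintro ⟨y, rfl⟩
    exact ev1_ann y

lemma exact_row2 : Function.Exact (fun P : WeylL => P * (tL * dL + 1))
    (fun P : WeylL => toEndL P (T (-1))) := by
  intro P
  constructor
  · intro hP
    have h1 : evm P = 0 := hP
    have h2 := K_mem P
    rw [h1, map_zero, sub_zero] at h2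
    obtain ⟨y, hy⟩ := h2
    exact ⟨y, hy⟩
  · rintro ⟨y, rfl⟩
    exact evm_ann y

-- commuting squares
lemma square1 (P : WeylL) : (P * dL) * tL = P * (tL * dL + 1) := by
  rw [mul_assoc, dt_rel]

lemma square2 (P : WeylL) : toEndL (P * tL) (T (-1)) = toEndL P (1 : LaurentPolynomial ℚ) := by
  rw [toEndL_mul, toEndL_tL, mulT_T]
  norm_num [one_eq_T0]

-- the WeylL-linear evaluation map and the quotient isomorphism
def phiW : WeylL →ₗ[WeylL] LaurentPolynomial ℚ where
  toFun := fun P => toEndL P (T (-1))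
  map_add' := fun x y => by
    show toEndL (x + y) (T (-1)) = toEndL x (T (-1)) + toEndL y (T (-1))
    rw [map_add]; rfl
  map_smul' := fun c x => by
    show toEndL (c • x) (T (-1)) = c • toEndL x (T (-1))
    rw [smul_eq_mul, toEndL_mul]
    rfl

def psiW : WeylL →ₗ[WeylL] (LaurentPolynomial ℚ ⧸ NN) := NN.mkQ.comp phiW

lemma psiW_surjective : Function.Surjective psiW := by
  intro z
  obtain ⟨f, rfl⟩ := NN.mkQ_surjective z
  exact ⟨sm f, congrArg NN.mkQ (evm_sm f)⟩

lemma ker_psiW : LinearMap.ker psiW = Submodule.span WeylL {tL} := by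
  apply le_antisymm
  · intro P hP
    rw [LinearMap.mem_ker, psiW, LinearMap.comp_apply, Submodule.mkQ_apply,
      Submodule.Quotient.mk_eq_zero] at hP
    obtain ⟨u, hu, c, hc, rfl⟩ := Submodule.mem_sup.mp (K2_mem P)
    obtain ⟨y, rfl⟩ := hu
    have hP' : phiW (y * tL + c) ∈ NN := hP
    clear hP
    have h1 : evm (y * tL) = ev1 y := by
      show toEndL (y * tL) (T (-1)) = toEndL y 1
      exact square2 y
    have h2 : evm (y * tL) ∈ Vsub := by
      rw [h1]
      have hn : ev1 y ∈ (NN : Set (LaurentPolynomial ℚ)) := by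
        rw [← range_ev1]; exact ⟨y, rfl⟩
      rw [← SetLike.mem_coe, V_eq_range]
      exact hn
    have h3 : phiW (y * tL + c) = evm (y * tL) + evm c := by
      show toEndL (y * tL + c) (T (-1)) = _
      rw [map_add]; rfl
    have h4 : evm c ∈ Vsub := by
      have h5 : evm (y * tL) + evm c ∈ Vsub := by
        rw [← h3, ← SetLike.mem_coe, V_eq_range]
        exact hP' 
      have := Submodule.sub_mem _ h5 h2
      rwa [add_sub_cancel_left] at this
    have h6 : evm c = 0 := eq_zero_of_mem_both _ (D0_evm hc) h4
    have h7 : c = 0 := by rw [← D0_sm_evm hc, h6, map_zero]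
    rw [h7, add_zero]
    exact Submodule.mem_span_singleton.mpr ⟨y, rfl⟩
  · rw [Submodule.span_le, Set.singleton_subset_iff]
    show psiW tL = 0
    rw [psiW, LinearMap.comp_apply, Submodule.mkQ_apply, Submodule.Quotient.mk_eq_zero]
    show toEndL tL (T (-1)) ∈ NN
    rw [toEndL_tL, mulT_T]
    refine ⟨1, ?_⟩
    rw [map_one, one_eq_T0]
    norm_num

/-- Let `R = ℚ⟨t,∂⟩/(∂t − t∂ − 1)` be the first Weyl algebra, acting on `ℚ[t] ⊆ ℚ[t,t⁻¹]`.
There is a commutative diagram of left `R`-module maps with exact rows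
`0 → R →(·∂) R →(P ↦ P(1)) ℚ[t] → 0` and
`0 → R →(·(t∂+1)) R →(P ↦ P(1/t)) ℚ[t,t⁻¹] → 0`,
the vertical maps being the identity, right multiplication by `t`, and the inclusion
`ℚ[t] ⊆ ℚ[t,t⁻¹]`; by the snake lemma one obtains an isomorphism of left `R`-modules
`R/R·t ≅ ℚ[t,t⁻¹]/ℚ[t]`. -/
theorem stmt12 :
    ∃ N : Submodule WeylL (LaurentPolynomial ℚ),
      (N : Set (LaurentPolynomial ℚ)) = Set.range (Polynomial.toLaurent (R := ℚ)) ∧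
      -- first row: 0 → R →(·∂) R →(P ↦ P(1)) ℚ[t] → 0 is exact
      Function.Injective (fun P : WeylL => P * dL) ∧
      Set.range (fun P : WeylL => toEndL P (1 : LaurentPolynomial ℚ)) = (N : Set _) ∧
      Function.Exact (fun P : WeylL => P * dL)
        (fun P : WeylL => toEndL P (1 : LaurentPolynomial ℚ)) ∧
      -- second row: 0 → R →(·(t∂+1)) R →(P ↦ P(1/t)) ℚ[t,t⁻¹] → 0 is exact
      Function.Injective (fun P : WeylL => P * (tL * dL + 1)) ∧
      Function.Surjective (fun P : WeylL => toEndL P (T (-1))) ∧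
      Function.Exact (fun P : WeylL => P * (tL * dL + 1))
        (fun P : WeylL => toEndL P (T (-1))) ∧
      -- the two squares of the diagram commute
      (∀ P : WeylL, (P * dL) * tL = P * (tL * dL + 1)) ∧
      (∀ P : WeylL, toEndL (P * tL) (T (-1)) = toEndL P (1 : LaurentPolynomial ℚ)) ∧
      -- snake lemma conclusion: R/R·t ≅ ℚ[t,t⁻¹]/ℚ[t] as left R-modules
      Nonempty ((WeylL ⧸ Submodule.span WeylL {tL}) ≃ₗ[WeylL]
        (LaurentPolynomial ℚ ⧸ N)) := by
  refine ⟨NN, rfl, inj_d, range_ev1, exact_row1, inj_td, evm_surjective, exact_row2,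
    square1, square2, ⟨?_⟩⟩
  exact (Submodule.quotEquivOfEq _ _ ker_psiW.symm) ≪≫ₗ
    (psiW.quotKerEquivOfSurjective psiW_surjective)

end
end
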